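/- Let G be a transitive permutation group on Ω and let B be a system of minimal blocks for G. Suppose x ∈ G satisfies supp(x) ⊆ B for some block B ∈ B, and let X = ⟨x^g : g ∈ G_B⟩ (the normal closure of x in the setwise stabiliser G_B, regarded as a permutation group on B). Then, up to permutation isomorphism, X^{|B|} ≤ G ≤ G_B^B ≀ G^B (the wreath product of the induced group on B with the induced group on the block system), with X^{|B|} contained in the base group of G_B^B ≀ G^B. -/

import Mathlib

open Equiv Pointwise

/-- A permutation group is transitive. -/
def IsTransitivePermGroup {Ω : Type*} (G : Subgroup (Equiv.Perm Ω)) : Prop :=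
  ∀ a b : Ω, ∃ g ∈ G, g a = b

/-- The element of the imprimitive wreath product determined by a function
`g : ι → Perm Δ` and a permutation `h` of the index set, acting on `Δ × ι` by
`(δ, i) ↦ (g i δ, h i)`. -/
def wreathPerm {Δ ι : Type*} (g : ι → Equiv.Perm Δ) (h : Equiv.Perm ι) :
    Equiv.Perm (Δ × ι) where
  toFun x := (g x.2 x.1, h x.2)
  invFun x := ((g (h⁻¹ x.2))⁻¹ x.1, h⁻¹ x.2)
  left_inv := by rintro ⟨d, i⟩; simp
  right_inv := by rintro ⟨d, i⟩; simp

/-- The imprimitive wreath product `Y ≀ H` of permutation groups, as a permutation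
group on `Δ × ι`.  (The defining set is already a subgroup, so taking the
subgroup closure does not change it.) -/
def wreathProduct {Δ ι : Type*} (Y : Subgroup (Equiv.Perm Δ))
    (H : Subgroup (Equiv.Perm ι)) : Subgroup (Equiv.Perm (Δ × ι)) :=
  Subgroup.closure {σ | ∃ (g : ι → Equiv.Perm Δ) (h : Equiv.Perm ι),
    (∀ i, g i ∈ Y) ∧ h ∈ H ∧ σ = wreathPerm g h}

/-- The copy `X^ι` of a power of `X` inside the base group of a wreath product,
as a permutation group on `Δ × ι`. -/
def basePower {Δ ι : Type*} (X : Subgroup (Equiv.Perm Δ)) :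
    Subgroup (Equiv.Perm (Δ × ι)) :=
  Subgroup.closure {σ | ∃ g : ι → Equiv.Perm Δ, (∀ i, g i ∈ X) ∧ σ = wreathPerm g 1}

/-- Transport of permutations along a bijection, as a group isomorphism. -/
def permMapEquiv {α β : Type*} (f : α ≃ β) : Equiv.Perm α ≃* Equiv.Perm β where
  toFun g := (f.symm.trans g).trans f
  invFun g := (f.trans g).trans f.symm
  left_inv g := by ext x; simp
  right_inv g := by ext x; simp
  map_mul' g₁ g₂ := by ext x; simp [Equiv.Perm.mul_apply]

/-- Transport of a permutation group along a bijection of the underlying sets.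
`mapPermGroup f G` is the permutation group on `β` corresponding to `G` under the
relabelling `f`; thus `G` and `mapPermGroup f G` are permutation isomorphic. -/
def mapPermGroup {α β : Type*} (f : α ≃ β) (G : Subgroup (Equiv.Perm α)) :
    Subgroup (Equiv.Perm β) :=
  Subgroup.map (permMapEquiv f).toMonoidHom G

/-- A partition of a set. -/
def IsPartition {Ω : Type*} (P : Set (Set Ω)) : Prop :=
  ∀ ω : Ω, ∃! B, B ∈ P ∧ ω ∈ B

/-- A block system for a permutation group: a `G`-invariant partition into sets of
size at least 2. -/
def IsBlockSystem {Ω : Type*} (G : Subgroup (Equiv.Perm Ω)) (P : Set (Set Ω)) : Prop :=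
  IsPartition P ∧ (∀ B ∈ P, 2 ≤ B.ncard) ∧
    ∀ g ∈ G, ∀ B ∈ P, (g : Equiv.Perm Ω) '' B ∈ P

/-- `P` is finer than `Q` (every block of `P` is contained in a block of `Q`). -/
def Finer {Ω : Type*} (P Q : Set (Set Ω)) : Prop := ∀ B ∈ P, ∃ C ∈ Q, B ⊆ C

/-- A system of minimal blocks: a block system such that the only block system finer
than it is itself. -/
def IsMinimalBlockSystem {Ω : Type*} (G : Subgroup (Equiv.Perm Ω))
    (P : Set (Set Ω)) : Prop :=
  IsBlockSystem G P ∧ ∀ Q, IsBlockSystem G Q → Finer Q P → Q = P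

/-- The setwise stabiliser `G_B` of a set of points, as a subgroup of `G`… here
realised inside `Perm Ω`. -/
def setStab {Ω : Type*} (G : Subgroup (Equiv.Perm Ω)) (B : Set Ω) :
    Subgroup (Equiv.Perm Ω) :=
  G ⊓ MulAction.stabilizer (Equiv.Perm Ω) B

/-- The permutation group induced on a set `B` by the elements of `G` preserving `B`.
(The defining set is a subgroup, so the closure does not change it.) -/
def inducedOnSet {Ω : Type*} (G : Subgroup (Equiv.Perm Ω)) (B : Set Ω) :
    Subgroup (Equiv.Perm B) :=
  Subgroup.closure {σ | ∃ (g : Equiv.Perm Ω) (hg : ∀ x, x ∈ B ↔ g x ∈ B),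
    g ∈ G ∧ σ = g.subtypePerm (fun x => (hg x).symm)}

/-- The action of a permutation of `Ω` on the subsets of `Ω`. -/
def permOnSets {Ω : Type*} (g : Equiv.Perm Ω) : Equiv.Perm (Set Ω) where
  toFun s := g '' s
  invFun s := g.symm '' s
  left_inv s := by simp [Set.image_image]
  right_inv s := by simp [Set.image_image]

/-- The permutation group `G^P` induced by `G` on an invariant family of blocks. -/
def inducedOnBlocks {Ω : Type*} (G : Subgroup (Equiv.Perm Ω)) (P : Set (Set Ω)) :
    Subgroup (Equiv.Perm P) :=
  Subgroup.closure {σ | ∃ (g : Equiv.Perm Ω)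
    (hg : ∀ s : Set Ω, s ∈ P ↔ (permOnSets g) s ∈ P), g ∈ G ∧ σ = (permOnSets g).subtypePerm (fun s => (hg s).symm)}
lemma wreathPerm_apply {Δ ι : Type*} (g : ι → Equiv.Perm Δ) (h : Equiv.Perm ι) (p : Δ × ι) :
    wreathPerm g h p = (g p.2 p.1, h p.2) := rfl

/-- The base-group embedding `(ι → Perm Δ) →* Perm (Δ × ι)` given by `g ↦ wreathPerm g 1`. -/
def baseHom {Δ ι : Type*} : (ι → Equiv.Perm Δ) →* Equiv.Perm (Δ × ι) where
  toFun g := wreathPerm g 1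
  map_one' := Equiv.ext fun p => rfl
  map_mul' g g' := Equiv.ext fun p => rfl

lemma permMapEquiv_apply {α β : Type*} (f : α ≃ β) (g : Equiv.Perm α) (b : β) :
    permMapEquiv f g b = f (g (f.symm b)) := rfl

lemma permMapEquiv_symm_apply {α β : Type*} (f : α ≃ β) (g : Equiv.Perm β) (a : α) :
    (permMapEquiv f).symm g a = f.symm (g (f a)) := rfl

lemma image_mem_iff {Ω : Type*} {w : Equiv.Perm Ω} {B : Set Ω} (h : ⇑w '' B = B) :
    ∀ a, a ∈ B ↔ w a ∈ B := by
  intro a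
  constructor
  · intro ha; rw [← h]; exact ⟨a, ha, rfl⟩
  · intro ha
    rw [← h] at ha
    obtain ⟨y, hy, hxy⟩ := ha
    rwa [← w.injective hxy]


/-- Lemma `lem:theOne`.  If `G` is transitive on `Ω`, `𝓑` is a
system of minimal blocks for `G`, and `x ∈ G` has support contained in a block
`B ∈ 𝓑`, then, with `X = ⟨x^g : g ∈ G_B⟩` regarded as a permutation group on `B`,
up to permutation isomorphism `X^{|𝓑|} ≤ G ≤ G_B^B ≀ G^𝓑`, with `X^{|𝓑|}` inside
the base group of the wreath product. -/
theorem statement_8 {Ω : Type} [Fintype Ω] [DecidableEq Ω] (G : Subgroup (Equiv.Perm Ω))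
    (hG : IsTransitivePermGroup G) (P : Set (Set Ω)) (hP : IsMinimalBlockSystem G P)
    (x : Equiv.Perm Ω) (hx : x ∈ G) (B : Set Ω) (hB : B ∈ P)
    (hsupp : {ω : Ω | x ω ≠ ω} ⊆ B) :
    ∃ f : Ω ≃ B × P,
      basePower (inducedOnSet (Subgroup.closure {y | ∃ g ∈ setStab G B, y = g * x * g⁻¹}) B)
          ≤ mapPermGroup f G ∧
      mapPermGroup f G ≤ wreathProduct (inducedOnSet (setStab G B) B) (inducedOnBlocks G P) := by
  classical
  obtain ⟨⟨hpart, hcard, hinv⟩, -⟩ := hP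
  choose blk hblk using hpart
  have hblkP : ∀ ω, blk ω ∈ P := fun ω => (hblk ω).1.1
  have hblkmem : ∀ ω, ω ∈ blk ω := fun ω => (hblk ω).1.2
  have huniq : ∀ (ω : Ω) (D : Set Ω), D ∈ P → ω ∈ D → D = blk ω :=
    fun ω D h1 h2 => (hblk ω).2 D ⟨h1, h2⟩
  -- choose a transversal
  have hBne : B.Nonempty := by
    have h2 := hcard B hB
    exact Set.nonempty_of_ncard_ne_zero (by omega)
  obtain ⟨b0, hb0⟩ := hBne
  have htrans : ∀ C : ↥P, ∃ g : Equiv.Perm Ω, g ∈ G ∧ ⇑g '' B = (C : Set Ω) := by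
    intro C
    have hCne : (C : Set Ω).Nonempty := by
      have h2 := hcard C C.2
      exact Set.nonempty_of_ncard_ne_zero (by omega)
    obtain ⟨c0, hc0⟩ := hCne
    obtain ⟨g, hgG, hgb⟩ := hG b0 c0
    refine ⟨g, hgG, ?_⟩
    have h1 : ⇑g '' B ∈ P := hinv g hgG B hB
    have h2 : c0 ∈ ⇑g '' B := ⟨b0, hb0, hgb⟩
    rw [huniq c0 _ h1 h2]
    exact (huniq c0 _ C.2 hc0).symm
  choose t htG htB using htrans
  have hback : ∀ (C : ↥P) (ω : Ω), ω ∈ (C : Set Ω) → (t C)⁻¹ ω ∈ B := by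
    intro C ω hω
    rw [← htB C] at hω
    obtain ⟨b, hb, rfl⟩ := hω
    simpa using hb
  have mem_block : ∀ (C : ↥P) (b : ↥B), t C ↑b ∈ (C : Set Ω) := by
    intro C b
    rw [← htB C]
    exact ⟨b, b.2, rfl⟩
  -- the relabelling
  let f : Ω ≃ B × P :=
    { toFun := fun ω => (⟨(t ⟨blk ω, hblkP ω⟩)⁻¹ ω, hback ⟨blk ω, hblkP ω⟩ ω (hblkmem ω)⟩,
        ⟨blk ω, hblkP ω⟩)
      invFun := fun p => t p.2 (p.1 : Ω)
      left_inv := fun ω => by simp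
      right_inv := by
        rintro ⟨⟨b, hb⟩, C⟩
        have hmem : t C b ∈ (C : Set Ω) := by rw [← htB C]; exact ⟨b, hb, rfl⟩
        have h2 : (⟨blk (t C b), hblkP _⟩ : ↥P) = C :=
          Subtype.ext (huniq (t C b) _ C.2 hmem).symm
        refine Prod.ext (Subtype.ext ?_) h2
        show ((t (⟨blk (t C b), hblkP _⟩ : ↥P))⁻¹ (t C b) : Ω) = b
        rw [h2]
        simp }
  have f_symm_apply : ∀ p : B × P, f.symm p = t p.2 (p.1 : Ω) := fun p => rfl
  have f_eval : ∀ (ω : Ω) (C : ↥P) (hω : ω ∈ (C : Set Ω)),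
      f ω = (⟨(t C)⁻¹ ω, hback C ω hω⟩, C) := by
    intro ω C hω
    rw [Equiv.apply_eq_iff_eq_symm_apply, f_symm_apply]
    simp
  refine ⟨f, ?_, ?_⟩
  · -- basePower ≤ mapPermGroup f G
    set N : Subgroup (Equiv.Perm Ω) :=
      Subgroup.closure {y | ∃ g ∈ setStab G B, y = g * x * g⁻¹} with hNdef
    -- the subgroup of permutations fixing the complement of B pointwise
    let S : Subgroup (Equiv.Perm Ω) :=
      { carrier := {y : Equiv.Perm Ω | ∀ ω ∉ B, y ω = ω}
        one_mem' := fun ω _ => rfl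
        mul_mem' := by
          intro a b ha hb ω hω
          simp only [Equiv.Perm.mul_apply]
          rw [hb ω hω, ha ω hω]
        inv_mem' := by
          intro a ha ω hω
          calc a⁻¹ ω = a⁻¹ (a ω) := by rw [ha ω hω]
            _ = ω := by simp }
    have hNle : N ≤ G ⊓ S := by
      rw [hNdef]
      refine (Subgroup.closure_le _).2 ?_
      rintro y ⟨g, hg, rfl⟩
      obtain ⟨hg1, hg2⟩ := Subgroup.mem_inf.mp hg
      have hgB : ⇑g '' B = B := MulAction.mem_stabilizer_iff.mp hg2
      refine Subgroup.mem_inf.mpr ⟨mul_mem (mul_mem hg1 hx) (inv_mem hg1), ?_⟩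
      intro ω hω
      have h1 : g⁻¹ ω ∉ B := by
        intro hmem
        exact hω (hgB ▸ ⟨g⁻¹ ω, hmem, by simp⟩)
      have h2 : x (g⁻¹ ω) = g⁻¹ ω := by
        by_contra hne
        exact h1 (hsupp hne)
      simp only [Equiv.Perm.mul_apply]
      rw [h2]
      simp
    have hNG : ∀ y ∈ N, y ∈ G := fun y hy => (Subgroup.mem_inf.mp (hNle hy)).1
    have hNfix : ∀ y ∈ N, ∀ ω ∉ B, y ω = ω := fun y hy => (Subgroup.mem_inf.mp (hNle hy)).2
    -- elements of the induced group lift back into N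
    have hXN : ∀ σ ∈ inducedOnSet N B, Equiv.Perm.ofSubtype σ ∈ N := by
      have hle : inducedOnSet N B ≤
          Subgroup.comap (Equiv.Perm.ofSubtype : Equiv.Perm ↥B →* Equiv.Perm Ω) N := by
        rw [inducedOnSet]
        refine (Subgroup.closure_le _).2 ?_
        rintro σ ⟨g, hg, hgN, rfl⟩
        simp only [Set.mem_setOf_eq, SetLike.mem_coe, Subgroup.mem_comap]
        have heq : Equiv.Perm.ofSubtype (g.subtypePerm (fun x => (hg x).symm)) = g := by
          apply Equiv.Perm.ofSubtype_subtypePerm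
          intro a hne
          by_contra hb
          exact hne (hNfix g hgN a hb)
        rw [heq]
        exact hgN
      exact fun σ hσ => Subgroup.mem_comap.mp (hle hσ)
    haveI : Fintype ↥P := Fintype.ofFinite _
    let Φ : (↥P → Equiv.Perm ↥B) →* Equiv.Perm Ω :=
      ((permMapEquiv f).symm.toMonoidHom).comp baseHom
    have key : ∀ (C : ↥P) (τ : Equiv.Perm ↥B), τ ∈ inducedOnSet N B →
        Φ (Pi.mulSingle C τ) ∈ G := by
      intro C τ hτ
      have heq : wreathPerm (Pi.mulSingle C τ) (1 : Equiv.Perm ↥P) =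
          permMapEquiv f (t C * Equiv.Perm.ofSubtype τ * (t C)⁻¹) := by
        apply Equiv.ext
        rintro ⟨b, D⟩
        rw [permMapEquiv_apply, f_symm_apply]
        by_cases hD : D = C
        · subst hD
          have h2 : Equiv.Perm.ofSubtype τ ↑b = ↑(τ b) :=
            Equiv.Perm.ofSubtype_apply_of_mem τ b.2
          have h3 : (t D * Equiv.Perm.ofSubtype τ * (t D)⁻¹) (t D ↑b) = t D ↑(τ b) := by
            simp only [Equiv.Perm.mul_apply, Equiv.Perm.inv_def, Equiv.symm_apply_apply]
            rw [h2]
          rw [h3, f_eval _ D (mem_block D (τ b))]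
          rw [wreathPerm_apply]
          refine Prod.ext (Subtype.ext ?_) rfl
          simp [Pi.mulSingle_eq_same]
        · have h3 : (t C)⁻¹ (t D ↑b) ∉ B := by
            intro hmem
            have hmC : t D ↑b ∈ (C : Set Ω) := by
              rw [← htB C]; exact ⟨_, hmem, by simp⟩
            have e1 := huniq (t D ↑b) _ C.2 hmC
            have e2 := huniq (t D ↑b) _ D.2 (mem_block D b)
            exact hD (Subtype.ext (e2.trans e1.symm))
          have h4 : (t C * Equiv.Perm.ofSubtype τ * (t C)⁻¹) (t D ↑b) = t D ↑b := by
            simp only [Equiv.Perm.mul_apply]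
            rw [Equiv.Perm.ofSubtype_apply_of_not_mem τ h3]
            simp
          rw [h4, f_eval _ D (mem_block D b)]
          rw [wreathPerm_apply]
          refine Prod.ext (Subtype.ext ?_) rfl
          simp [Pi.mulSingle_eq_of_ne hD]
      have heq2 : Φ (Pi.mulSingle C τ) = t C * Equiv.Perm.ofSubtype τ * (t C)⁻¹ := by
        show (permMapEquiv f).symm (wreathPerm (Pi.mulSingle C τ) 1) = _
        rw [heq, MulEquiv.symm_apply_apply]
      rw [heq2]
      exact mul_mem (mul_mem (htG C) (hNG _ (hXN τ hτ))) (inv_mem (htG C))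
    rw [basePower]
    refine (Subgroup.closure_le _).2 ?_
    rintro σ ⟨gf, hgf, rfl⟩
    have hu : Φ gf ∈ G := by
      have hmap := Finset.map_noncommProd Finset.univ (fun i => Pi.mulSingle i (gf i))
        (fun i _ j _ _ => Pi.mulSingle_apply_commute gf i j) Φ
      rw [Finset.noncommProd_mulSingle gf] at hmap
      rw [hmap]
      exact Subgroup.noncommProd_mem G _ (fun C _ => key C (gf C) (hgf C))
    refine Subgroup.mem_map.mpr ⟨Φ gf, hu, ?_⟩
    show permMapEquiv f ((permMapEquiv f).symm (wreathPerm gf 1)) = wreathPerm gf 1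
    exact MulEquiv.apply_symm_apply _ _
  · -- mapPermGroup f G ≤ wreathProduct
    intro τ hτ
    obtain ⟨u, huG, rfl⟩ := Subgroup.mem_map.mp hτ
    apply Subgroup.subset_closure
    have hpres : ∀ s : Set Ω, s ∈ P ↔ permOnSets u s ∈ P := by
      intro s
      constructor
      · exact fun hs => hinv u huG s hs
      · intro hs
        have h1 : ⇑u⁻¹ '' (permOnSets u s) ∈ P := hinv u⁻¹ (inv_mem huG) _ hs
        have h2 : ⇑u⁻¹ '' (permOnSets u s) = s := by
          show ⇑u⁻¹ '' (⇑u '' s) = s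
          rw [Set.image_image]
          simp
        rwa [h2] at h1
    set h : Equiv.Perm ↥P := (permOnSets u).subtypePerm (fun s => (hpres s).symm) with hhdef
    have hcoe : ∀ C : ↥P, ((h C : ↥P) : Set Ω) = ⇑u '' (C : Set Ω) := fun C => rfl
    have hwB : ∀ C : ↥P, ⇑((t (h C))⁻¹ * u * t C) '' B = B := by
      intro C
      have e1 : ⇑((t (h C))⁻¹ * u * t C) '' B = ⇑(t (h C))⁻¹ '' (⇑u '' (⇑(t C) '' B)) := by
        simp [Set.image_image, Equiv.Perm.mul_apply]
      rw [e1, htB C, ← hcoe C, ← htB (h C), Set.image_image]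
      simp
    have hwiff : ∀ C : ↥P, ∀ a : Ω, a ∈ B ↔ ((t (h C))⁻¹ * u * t C) a ∈ B :=
      fun C => image_mem_iff (hwB C)
    refine ⟨fun C => ((t (h C))⁻¹ * u * t C).subtypePerm (fun a => (hwiff C a).symm), h, ?_, ?_, ?_⟩
    · intro C
      apply Subgroup.subset_closure
      refine ⟨_, hwiff C, ?_, rfl⟩
      refine Subgroup.mem_inf.mpr ⟨mul_mem (mul_mem (inv_mem (htG _)) huG) (htG C), ?_⟩
      exact MulAction.mem_stabilizer_iff.mpr (hwB C)
    · apply Subgroup.subset_closure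
      exact ⟨u, hpres, huG, rfl⟩
    · apply Equiv.ext
      rintro ⟨b, C⟩
      show permMapEquiv f u (b, C) = _
      rw [permMapEquiv_apply, f_symm_apply]
      have hm : u (t C ↑b) ∈ ((h C : ↥P) : Set Ω) := by
        rw [hcoe C]
        exact ⟨t C ↑b, mem_block C b, rfl⟩
      rw [f_eval _ (h C) hm, wreathPerm_apply]
      refine Prod.ext (Subtype.ext ?_) rfl
      simp [Equiv.Perm.mul_apply]
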